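/- For every TRS R over a signature Σ, each of the relations →∞, ∞→ and =∞ is reflexive and transitive, and the relation =∞ is moreover symmetric (hence an equivalence relation on T). -/

import Mathlib

open Relation

/-- A signature: a type of function symbols together with an arity for each symbol. -/
structure Signature where
  Sym : Type
  ar : Sym → ℕ

/-- The polynomial functor whose final coalgebra is the set of (finite and infinite)
terms over the signature `Sg` and the set `X` of variables. -/
def TermF (Sg : Signature) (X : Type) : PFunctor.{0} :=
  ⟨X ⊕ Sg.Sym, fun a => Sum.rec (fun _ => Empty) (fun f => Fin (Sg.ar f)) a⟩

/-- The set `T` of finite and infinite terms over `Sg` and `X`, defined coinductively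
(as the final coalgebra, i.e. the M-type, of `TermF Sg X`). -/
def Tm (Sg : Signature) (X : Type) : Type := PFunctor.M (TermF Sg X)

variable {Sg : Signature} {X : Type}

/-- The term consisting of a single variable. -/
def Tm.var (x : X) : Tm Sg X := PFunctor.M.mk ⟨Sum.inl x, Empty.elim⟩

/-- The term `f(t₁,…,tₙ)` with root symbol `f` and arguments `args`. -/
def Tm.node (f : Sg.Sym) (args : Fin (Sg.ar f) → Tm Sg X) : Tm Sg X :=
  PFunctor.M.mk ⟨Sum.inr f, args⟩

/-- One step of the corecursive definition of substitution:
`Sum.inl t` means `t` still has to be substituted, `Sum.inr t` means `t` is copied. -/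
def substAux (σ : X → Tm Sg X) :
    (Tm Sg X ⊕ Tm Sg X) → (TermF Sg X) (Tm Sg X ⊕ Tm Sg X) := fun s =>
  match s with
  | Sum.inl t =>
    match PFunctor.M.dest t with
    | ⟨Sum.inl x, _⟩ =>
        ⟨(PFunctor.M.dest (σ x)).1, fun b => Sum.inr ((PFunctor.M.dest (σ x)).2 b)⟩
    | ⟨Sum.inr f, k⟩ => ⟨Sum.inr f, fun b => Sum.inl (k b)⟩
  | Sum.inr t =>
      ⟨(PFunctor.M.dest t).1, fun b => Sum.inr ((PFunctor.M.dest t).2 b)⟩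

/-- Application `tσ` of a substitution `σ : X → T` to a term `t`, defined corecursively. -/
def subst (σ : X → Tm Sg X) (t : Tm Sg X) : Tm Sg X :=
  PFunctor.M.corec (substAux σ) (Sum.inl t)

/-- `Occurs x t`: the variable `x` occurs in the term `t`. -/
inductive Occurs (x : X) : Tm Sg X → Prop
  | here {t : Tm Sg X} : t = Tm.var x → Occurs x t
  | deeper {t : Tm Sg X} {f : Sg.Sym} {args : Fin (Sg.ar f) → Tm Sg X}
      (i : Fin (Sg.ar f)) : t = Tm.node f args → Occurs x (args i) → Occurs x t

/-- A term rewriting system over `Sg` and `X`: a set of rules `ℓ → r` such that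
`ℓ` is not a variable and all variables of `r` occur in `ℓ`. -/
structure TRS (Sg : Signature) (X : Type) where
  rules : Set (Tm Sg X × Tm Sg X)
  lhs_not_var : ∀ l r, (l, r) ∈ rules → ∀ x : X, l ≠ Tm.var x
  vars_lhs : ∀ l r, (l, r) ∈ rules → ∀ x : X, Occurs x r → Occurs x l

/-- Relations on terms. -/
abbrev TRel (Sg : Signature) (X : Type) := Tm Sg X → Tm Sg X → Prop

/-- The root step relation `→ε := {(ℓσ, rσ) | ℓ → r ∈ R, σ a substitution}`. -/
def RootStep (R : TRS Sg X) : TRel Sg X := fun s t =>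
  ∃ l r, (l, r) ∈ R.rules ∧ ∃ σ : X → Tm Sg X, s = subst σ l ∧ t = subst σ r

/-- `StepAt Q p s t`: a `Q`-step at position `p`, i.e. `s = C[u]`, `t = C[v]` with
`(u,v) ∈ Q` and `C` a one-hole context whose hole is at position `p`. -/
inductive StepAt (Q : TRel Sg X) : List ℕ → Tm Sg X → Tm Sg X → Prop
  | here {s t : Tm Sg X} : Q s t → StepAt Q [] s t
  | deeper {f : Sg.Sym} {ss ts : Fin (Sg.ar f) → Tm Sg X} (i : Fin (Sg.ar f))
      {p : List ℕ} : StepAt Q p (ss i) (ts i) → (∀ j, j ≠ i → ss j = ts j) →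
      StepAt Q ((i : ℕ) :: p) (Tm.node f ss) (Tm.node f ts)

/-- The one-step rewrite relation `→` of a TRS: a root step applied inside a
one-hole context. -/
def Step (R : TRS Sg X) : TRel Sg X := fun s t => ∃ p, StepAt (RootStep R) p s t

/-- The lifting `↓R` of a relation `R`:
`↓R := {(f(s₁,…,sₙ), f(t₁,…,tₙ)) | f ∈ Σ, s₁ R t₁, …, sₙ R tₙ} ∪ Id`. -/
def liftRel (R : TRel Sg X) : TRel Sg X := fun s t =>
  s = t ∨ ∃ (f : Sg.Sym) (ss ts : Fin (Sg.ar f) → Tm Sg X),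
    s = Tm.node f ss ∧ t = Tm.node f ts ∧ ∀ i, R (ss i) (ts i)

lemma liftRel_mono : Monotone (liftRel (Sg := Sg) (X := X)) := by
  intro R S h s t hst
  rcases hst with h1 | ⟨f, ss, ts, rfl, rfl, hi⟩
  · exact Or.inl h1
  · exact Or.inr ⟨f, ss, ts, rfl, rfl, fun i => h _ _ (hi i)⟩

/-- Relational composition `r ∘ s`. -/
def relComp (r s : TRel Sg X) : TRel Sg X := fun a c => ∃ b, r a b ∧ s b c

/-- The monotone operator `S ↦ (→ε ∪ ↓R)* ∘ ↓S` (for a fixed `R`). -/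
def iredInnerHom (R : TRS Sg X) (U : TRel Sg X) : TRel Sg X →o TRel Sg X where
  toFun S := relComp
    (ReflTransGen (fun s t => RootStep R s t ∨ liftRel U s t)) (liftRel S)
  monotone' := by
    intro S S' h a c hac
    rcases hac with ⟨b, h1, h2⟩
    exact ⟨b, h1, liftRel_mono h _ _ h2⟩

/-- The monotone operator `R ↦ νS.((→ε ∪ ↓R)* ∘ ↓S)`. -/
def iredHom (R : TRS Sg X) : TRel Sg X →o TRel Sg X where
  toFun U := OrderHom.gfp (iredInnerHom R U)
  monotone' := by
    intro U V h
    apply OrderHom.gfp.monotone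
    intro S a c hac
    rcases hac with ⟨b, h1, h2⟩
    refine ⟨b, ?_, h2⟩
    refine ReflTransGen.mono ?_ _ _ h1
    exact (fun x y hxy => hxy.imp id (fun h' => liftRel_mono h _ _ h'))

/-- The infinitary rewrite relation `→∞ := μR.νS.((→ε ∪ ↓R)* ∘ ↓S)`. -/
def ired (R : TRS Sg X) : TRel Sg X := OrderHom.lfp (iredHom R)

/-- The monotone operator `R' ↦ (→ε ∪ ↓R')*`. -/
def biHom (R : TRS Sg X) : TRel Sg X →o TRel Sg X where
  toFun U := ReflTransGen (fun s t => RootStep R s t ∨ liftRel U s t)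
  monotone' := by
    intro U V h a b hab
    refine ReflTransGen.mono ?_ _ _ hab
    exact (fun x y hxy => hxy.imp id (fun h' => liftRel_mono h _ _ h'))

/-- The bi-infinite rewrite relation `∞→ := νR.(→ε ∪ ↓R)*`. -/
def bired (R : TRS Sg X) : TRel Sg X := OrderHom.gfp (biHom R)

/-- The monotone operator `R' ↦ (←ε ∪ →ε ∪ ↓R')*`. -/
def ieqHom (R : TRS Sg X) : TRel Sg X →o TRel Sg X where
  toFun U := ReflTransGen (fun s t => RootStep R t s ∨ RootStep R s t ∨ liftRel U s t)
  monotone' := by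
    intro U V h a b hab
    refine ReflTransGen.mono ?_ _ _ hab
    exact
      (fun x y hxy => hxy.imp id (fun h' => h'.imp id (fun h'' => liftRel_mono h _ _ h'')))

/-- The infinitary equational reasoning relation `=∞ := νR.(←ε ∪ →ε ∪ ↓R)*`. -/
def ieq (R : TRS Sg X) : TRel Sg X := OrderHom.gfp (ieqHom R)

/-- `Agree n s t`: the terms `s` and `t` coincide up to depth `n`
(i.e. `d(s,t) ≤ 2^{-n}` for the standard metric `d`). -/
def Agree : ℕ → Tm Sg X → Tm Sg X → Prop
  | 0, _, _ => True
  | n + 1, s, t =>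
      (∃ x : X, s = Tm.var x ∧ t = Tm.var x) ∨
      ∃ (f : Sg.Sym) (ss ts : Fin (Sg.ar f) → Tm Sg X),
        s = Tm.node f ss ∧ t = Tm.node f ts ∧ ∀ i, Agree n (ss i) (ts i)

/-- `ConvTo t p l tl`: as `β` approaches the ordinal `l` from below,
`d(t β, tl)` tends to `0` and the depth `|p β|` tends to infinity. -/
def ConvTo (t : Ordinal.{0} → Tm Sg X) (p : Ordinal.{0} → List ℕ) (l : Ordinal.{0})
    (tl : Tm Sg X) : Prop :=
  (∀ n : ℕ, ∃ β₀ < l, ∀ β, β₀ ≤ β → β < l → Agree n (t β) tl) ∧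
  (∀ n : ℕ, ∃ β₀ < l, ∀ β, β₀ ≤ β → β < l → n ≤ (p β).length)

/-- A transfinite sequence of `Q`-steps `(t_β →_{p_β} t_{β+1})_{β<α}` of ordinal
length `α`, weakly continuous and with depths tending to infinity at every limit
ordinal `λ < α`. -/
structure TransSeq (Q : TRel Sg X) (α : Ordinal.{0}) where
  t : Ordinal.{0} → Tm Sg X
  pos : Ordinal.{0} → List ℕ
  step : ∀ β < α, StepAt Q (pos β) (t β) (t (β + 1))
  conv : ∀ l < α, Order.IsSuccLimit l → ConvTo t pos l (t l)

/-- A transfinite rewrite sequence is strongly convergent if its length is a successor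
ordinal (or zero), or there exists a final term to which it converges (with depths
tending to infinity) at the limit. -/
def TransSeq.StronglyConvergent {Q : TRel Sg X} {α : Ordinal.{0}} (s : TransSeq Q α) : Prop :=
  Order.IsSuccLimit α → ∃ tl, ConvTo s.t s.pos α tl

/-- `SCRed Q s t`: there is a strongly convergent transfinite sequence of `Q`-steps
from `s` to `t`. -/
def SCRed (Q : TRel Sg X) : TRel Sg X := fun a b =>
  ∃ (α : Ordinal.{0}) (s : TransSeq Q α), s.t 0 = a ∧ s.t α = b ∧
    (Order.IsSuccLimit α → ConvTo s.t s.pos α b)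

/-- The standard, ordinal-based infinitary rewrite relation `→∞_ord`:
strongly convergent transfinite rewrite sequences. -/
def iredOrd (R : TRS Sg X) : TRel Sg X := SCRed (RootStep R)

-- auxiliary facts about the term constructors
lemma node_ne_var (f : Sg.Sym) (args : Fin (Sg.ar f) → Tm Sg X) (x : X) :
    Tm.node f args ≠ Tm.var x := by
  intro h
  have h1 := congrArg (fun u => (PFunctor.M.dest u).1) h
  simp only [Tm.node, Tm.var, PFunctor.M.dest_mk] at h1
  cases h1

lemma node_inj_sym {f g : Sg.Sym} {ss : Fin (Sg.ar f) → Tm Sg X}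
    {ts : Fin (Sg.ar g) → Tm Sg X} (h : Tm.node f ss = Tm.node g ts) : f = g := by
  have h1 := congrArg (fun u => (PFunctor.M.dest u).1) h
  simp only [Tm.node, PFunctor.M.dest_mk] at h1
  exact Sum.inr.inj h1

lemma node_inj_args {f : Sg.Sym} {ss ts : Fin (Sg.ar f) → Tm Sg X}
    (h : Tm.node f ss = Tm.node f ts) : ss = ts := by
  have h' : (PFunctor.M.mk ⟨Sum.inr f, ss⟩ : Tm Sg X) = PFunctor.M.mk ⟨Sum.inr f, ts⟩ := h
  have h1 := PFunctor.M.mk_inj h'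
  injection h1 with h2 h3

lemma var_inj {x y : X} (h : (Tm.var x : Tm Sg X) = Tm.var y) : x = y := by
  have h1 := congrArg (fun u => (PFunctor.M.dest u).1) h
  simp only [Tm.var, PFunctor.M.dest_mk] at h1
  exact Sum.inl.inj h1

lemma occurs_var_iff {x y : X} : Occurs x (Tm.var y : Tm Sg X) ↔ x = y := by
  constructor
  · intro h
    cases h with
    | here h => exact (var_inj h.symm)
    | deeper i h _ => exact absurd h.symm (node_ne_var _ _ _)
  · rintro rfl
    exact Occurs.here rfl

lemma occurs_node_iff {x : X} {f : Sg.Sym} {args : Fin (Sg.ar f) → Tm Sg X} :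
    Occurs x (Tm.node f args) ↔ ∃ i, Occurs x (args i) := by
  constructor
  · intro h
    cases h with
    | here h => exact absurd h (node_ne_var _ _ _)
    | deeper i h hocc =>
      obtain rfl := node_inj_sym h
      obtain rfl := node_inj_args h
      exact ⟨i, hocc⟩
  · rintro ⟨i, h⟩
    exact Occurs.deeper i rfl h

section AuxProofs

variable {Sg : Signature} {X : Type}

private lemma liftRel_compose {P Q K : TRel Sg X}
    (hPK : ∀ x y, P x y → K x y) (hQK : ∀ x y, Q x y → K x y)
    (hc : ∀ x y z, P x y → Q y z → K x z) :
    ∀ {a b c}, liftRel P a b → liftRel Q b c → liftRel K a c := by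
  rintro a b c (rfl | ⟨f, ss, ts, rfl, rfl, hi⟩) h2
  · rcases h2 with rfl | ⟨f, ss, ts, rfl, rfl, hi⟩
    · exact Or.inl rfl
    · exact Or.inr ⟨f, ss, ts, rfl, rfl, fun i => hQK _ _ (hi i)⟩
  · rcases h2 with rfl | ⟨g, ss', ts', heq, rfl, hi'⟩
    · exact Or.inr ⟨f, ss, ts, rfl, rfl, fun i => hPK _ _ (hi i)⟩
    · obtain rfl := node_inj_sym heq
      obtain rfl := node_inj_args heq
      exact Or.inr ⟨f, ss, ts', rfl, rfl, fun i => hc _ _ _ (hi i) (hi' i)⟩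

variable (R : TRS Sg X)

private lemma ired_eq_gfp : ired R = OrderHom.gfp (iredInnerHom R (ired R)) :=
  (OrderHom.map_lfp (iredHom R)).symm

private lemma ired_unfold :
    ired R = relComp (ReflTransGen (fun s t => RootStep R s t ∨ liftRel (ired R) s t))
      (liftRel (ired R)) := by
  conv_lhs => rw [ired_eq_gfp R, ← OrderHom.map_gfp (iredInnerHom R (ired R)),
    ← ired_eq_gfp R]
  rfl

private lemma ired_intro {a b c : Tm Sg X}
    (h1 : ReflTransGen (fun s t => RootStep R s t ∨ liftRel (ired R) s t) a b)
    (h2 : liftRel (ired R) b c) : ired R a c := by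
  rw [ired_unfold R]; exact ⟨b, h1, h2⟩

private lemma ired_dest {a c : Tm Sg X} (h : ired R a c) :
    ∃ b, ReflTransGen (fun s t => RootStep R s t ∨ liftRel (ired R) s t) a b ∧
      liftRel (ired R) b c := by
  rw [ired_unfold R] at h; exact h

private lemma ired_refl (a : Tm Sg X) : ired R a a :=
  ired_intro R ReflTransGen.refl (Or.inl rfl)

private lemma ired_trans : ∀ {a b c : Tm Sg X}, ired R a b → ired R b c → ired R a c := by
  have main : relComp (ired R) (ired R) ≤ ired R := by
    have hind := OrderHom.lfp_induction (f := iredHom R)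
      (p := fun W => relComp (ired R) W ≤ ired R) ?_ ?_
    · exact hind
    · -- step
      intro W hpW hWle
      have hWired : W ≤ ired R := hWle
      set G : TRel Sg X := (iredHom R) W with hG
      have hGfix : (iredInnerHom R W) G = G := OrderHom.map_gfp (iredInnerHom R W)
      have hGdest : ∀ b c, G b c → ∃ b₂,
          ReflTransGen (fun s t => RootStep R s t ∨ liftRel W s t) b b₂ ∧
          liftRel G b₂ c := by
        intro b c h
        rw [← hGfix] at h
        exact h
      have hGrefl : ∀ a, G a a := by
        intro a
        rw [← hGfix]
        exact ⟨a, ReflTransGen.refl, Or.inl rfl⟩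
      have L1 : ∀ {b b₂ : Tm Sg X},
          ReflTransGen (fun s t => RootStep R s t ∨ liftRel W s t) b b₂ →
          ∀ a, ired R a b → ired R a b₂ := by
        intro b b₂ h
        induction h with
        | refl => exact fun a h => h
        | tail hr hstep ih =>
          intro a ha
          obtain ⟨a₃, hr₃, hl₃⟩ := ired_dest R (ih a ha)
          rcases hstep with hroot | hlift
          · exact ired_intro R ((hr₃.tail (Or.inr hl₃)).tail (Or.inl hroot)) (Or.inl rfl)
          · refine ired_intro R hr₃ ?_
            exact liftRel_compose (fun _ _ h => h) (fun x y h => hWired x y h)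
              (fun x y z hxy hyz => hpW x z ⟨y, hxy, hyz⟩) hl₃ hlift
      have hYpost : relComp (ired R) G ≤ (iredInnerHom R (ired R)) (relComp (ired R) G) := by
        rintro a c ⟨b, hab, hbc⟩
        obtain ⟨b₂, hbw, hblift⟩ := hGdest b c hbc
        obtain ⟨a₃, hr₃, hl₃⟩ := ired_dest R (L1 hbw a hab)
        refine ⟨a₃, hr₃, ?_⟩
        exact liftRel_compose (K := relComp (ired R) G)
          (fun x y h => ⟨y, h, hGrefl y⟩) (fun x y h => ⟨x, ired_refl R x, h⟩)
          (fun x y z hxy hyz => ⟨y, hxy, hyz⟩) hl₃ hblift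
      have hle : relComp (ired R) G ≤ OrderHom.gfp (iredInnerHom R (ired R)) :=
        OrderHom.le_gfp (f := iredInnerHom R (ired R)) hYpost
      rw [← ired_eq_gfp R] at hle
      exact hle
    · -- sSup closed
      intro s hs
      rintro a c ⟨b, hab, hbc⟩
      simp only [sSup_apply, iSup_apply, iSup_Prop_eq] at hbc
      obtain ⟨W, hW⟩ := hbc
      exact hs W.1 W.2 a c ⟨b, hab, hW⟩
  exact fun {a b c} h1 h2 => main a c ⟨b, h1, h2⟩

private lemma bired_eq :
    bired R = ReflTransGen (fun s t => RootStep R s t ∨ liftRel (bired R) s t) :=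
  (OrderHom.map_gfp (biHom R)).symm

private lemma ieq_eq :
    ieq R = ReflTransGen
      (fun s t => RootStep R t s ∨ RootStep R s t ∨ liftRel (ieq R) s t) :=
  (OrderHom.map_gfp (ieqHom R)).symm

private lemma ieq_symm : ∀ {s t : Tm Sg X}, ieq R s t → ieq R t s := by
  have hpost : (fun a b => ieq R b a) ≤ (ieqHom R) (fun a b => ieq R b a) := by
    intro a b h
    show ReflTransGen _ a b
    rw [ieq_eq R] at h
    induction h with
    | refl => exact ReflTransGen.refl
    | tail hr hstep ih =>
      refine ReflTransGen.head ?_ ih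
      rcases hstep with h1 | h2 | h3
      · exact Or.inr (Or.inl h1)
      · exact Or.inl h2
      · refine Or.inr (Or.inr ?_)
        rcases h3 with rfl | ⟨f, ss, ts, rfl, rfl, hi⟩
        · exact Or.inl rfl
        · exact Or.inr ⟨f, ts, ss, rfl, rfl, fun i => hi i⟩
  intro s t h
  have h' := OrderHom.le_gfp (f := ieqHom R) hpost
  exact h' t s h

end AuxProofs

/-- For every TRS `R`, each of the relations `→∞`, `∞→` and `=∞` is
reflexive and transitive, and `=∞` is moreover symmetric, hence an equivalence
relation on the set of terms. -/
theorem refl_trans_symm (Sg : Signature) (X : Type) [Infinite X] (R : TRS Sg X) :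
    Reflexive (ired R) ∧ Transitive (ired R) ∧
    Reflexive (bired R) ∧ Transitive (bired R) ∧
    Reflexive (ieq R) ∧ Transitive (ieq R) ∧ Symmetric (ieq R) ∧
    Equivalence (ieq R) := by
  have hb := bired_eq R
  have hq := ieq_eq R
  refine ⟨fun a => ired_refl R a, fun {a b c} h1 h2 => ired_trans R h1 h2,
    ?_, ?_, ?_, ?_, ?_, ?_⟩
  · intro a; rw [hb]
  · intro a b c h1 h2; rw [hb] at h1 h2 ⊢; exact h1.trans h2
  · intro a; rw [hq]
  · intro a b c h1 h2; rw [hq] at h1 h2 ⊢; exact h1.trans h2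
  · exact fun {a b} h => ieq_symm R h
  · have ht : Transitive (ieq R) := by
      intro a b c h1 h2; rw [hq] at h1 h2 ⊢; exact h1.trans h2
    have hr : Reflexive (ieq R) := by intro a; rw [hq]
    exact ⟨hr, fun {a b} h => ieq_symm R h, fun {a b c} h1 h2 => ht h1 h2⟩
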